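/- (Generalized dephasing channels) Fix unit vectors φ_1,…,φ_d ∈ ℂ^e (not necessarily orthogonal). Define the generalized dephasing channel N on d×d matrices by N(ρ)_{i i'} = ρ_{i i'} ⟨φ_{i'}, φ_i⟩ and its complementary channel N^c(ρ) = ∑_{i=1}^d ρ_{ii} |φ_i⟩⟨φ_i|. Then for every density operator ρ on ℂ^d with diagonal entries r_i = ρ_{ii}: H(ρ) + H(N(ρ)) − H(N^c(ρ)) ≤ 2·(−∑_i r_i log₂ r_i) − H(∑_i r_i |φ_i⟩⟨φ_i|), with equality whenever ρ is diagonal in the standard basis. In particular, the mutual information I(A;B) of the channel is maximized by input states diagonal in the dephasing basis. -/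

import Mathlib

open Matrix ComplexOrder

noncomputable section

/-- outer product `|v⟩⟨v|`. -/
def proj {ι : Type*} (v : ι → ℂ) : Matrix ι ι ℂ :=
  Matrix.of fun i j => v i * star (v j)

/-- von Neumann entropy (base 2), via the eigenvalues of a Hermitian matrix. -/
def vnEntropy {ι : Type*} [Fintype ι] [DecidableEq ι] (A : Matrix ι ι ℂ) : ℝ :=
  if h : A.IsHermitian then -∑ i, h.eigenvalues i * Real.logb 2 (h.eigenvalues i) else 0

/-- The generalized dephasing channel with environment states `φ_i`:
`N(ρ)_{i i'} = ρ_{i i'} ⟨φ_{i'}, φ_i⟩`. -/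
def gdChannel {d e : ℕ} (φ : Fin d → (Fin e → ℂ)) (ρ : Matrix (Fin d) (Fin d) ℂ) :
    Matrix (Fin d) (Fin d) ℂ :=
  Matrix.of fun i i' => ρ i i' * ∑ x, star (φ i' x) * φ i x

/-- The complementary channel `N^c(ρ) = ∑_i ρ_{ii} |φ_i⟩⟨φ_i|`. -/
def gdComplement {d e : ℕ} (φ : Fin d → (Fin e → ℂ)) (ρ : Matrix (Fin d) (Fin d) ℂ) :
    Matrix (Fin e) (Fin e) ℂ :=
  ∑ i, ρ i i • proj (φ i)

section Aux

open Real Finset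

lemma jensen_transfer {m n : Type*} [Fintype m] [Fintype n]
    (D : m → n → ℝ) (hD : ∀ i j, 0 ≤ D i j)
    (hrow : ∀ i, ∑ j, D i j = 1) (hcol : ∀ j, ∑ i, D i j = 1)
    (ν : n → ℝ) (hν : ∀ j, 0 ≤ ν j) :
    ∑ j, Real.negMulLog (ν j) ≤ ∑ i, Real.negMulLog (∑ j, D i j * ν j) := by
  calc ∑ j, negMulLog (ν j) = ∑ j, (∑ i, D i j) * negMulLog (ν j) := by
        simp [hcol]
    _ = ∑ i, ∑ j, D i j * negMulLog (ν j) := by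
        rw [Finset.sum_comm]
        simp [Finset.sum_mul]
    _ ≤ ∑ i, negMulLog (∑ j, D i j * ν j) := by
        refine Finset.sum_le_sum fun i _ => ?_
        have := Real.concaveOn_negMulLog.le_map_sum (t := Finset.univ) (w := D i) (p := ν)
          (fun j _ => hD i j) (hrow i) (fun j _ => hν j)
        simpa [smul_eq_mul] using this

lemma unitary_row {n : Type*} [Fintype n] [DecidableEq n] (U : Matrix.unitaryGroup n ℂ) (i : n) :
    ∑ j, Complex.normSq ((U : Matrix n n ℂ) i j) = 1 := by
  have h := Matrix.mem_unitaryGroup_iff.mp U.2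
  have h1 : ((U : Matrix n n ℂ) * star (U : Matrix n n ℂ)) i i = 1 := by rw [h]; simp
  have h2 : ((U : Matrix n n ℂ) * star (U : Matrix n n ℂ)) i i
      = ∑ j, (Complex.normSq ((U : Matrix n n ℂ) i j) : ℂ) := by
    simp only [Matrix.mul_apply, Matrix.star_apply]
    exact Finset.sum_congr rfl fun j _ => by
      rw [← Complex.mul_conj]; rfl
  rw [h2] at h1
  exact_mod_cast h1

lemma unitary_col {n : Type*} [Fintype n] [DecidableEq n] (U : Matrix.unitaryGroup n ℂ) (j : n) :
    ∑ i, Complex.normSq ((U : Matrix n n ℂ) i j) = 1 := by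
  have h := Matrix.mem_unitaryGroup_iff'.mp U.2
  have h1 : (star (U : Matrix n n ℂ) * (U : Matrix n n ℂ)) j j = 1 := by rw [h]; simp
  have h2 : (star (U : Matrix n n ℂ) * (U : Matrix n n ℂ)) j j
      = ∑ i, (Complex.normSq ((U : Matrix n n ℂ) i j) : ℂ) := by
    simp only [Matrix.mul_apply, Matrix.star_apply]
    exact Finset.sum_congr rfl fun i _ => by
      rw [mul_comm, ← Complex.mul_conj]; rfl
  rw [h2] at h1
  exact_mod_cast h1

lemma diag_re {n : Type*} [Fintype n] [DecidableEq n] {A : Matrix n n ℂ} (h : A.IsHermitian)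
    (i : n) :
    (A i i).re = ∑ j, Complex.normSq ((h.eigenvectorUnitary : Matrix n n ℂ) i j)
      * h.eigenvalues j := by
  have h1 : A i i = ∑ j, ((Complex.normSq ((h.eigenvectorUnitary : Matrix n n ℂ) i j)
      * h.eigenvalues j : ℝ) : ℂ) := by
    conv_lhs => rw [h.spectral_theorem, Unitary.conjStarAlgAut_apply]
    rw [Matrix.mul_apply]
    simp only [Matrix.mul_diagonal, Matrix.star_apply, Function.comp_apply]
    refine Finset.sum_congr rfl fun j _ => ?_
    rw [Complex.ofReal_mul, ← Complex.mul_conj, ← Complex.star_def]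
    exact mul_right_comm _ _ _
  rw [h1]
  push_cast
  simp

lemma shannon_eq {ι : Type*} [Fintype ι] (f : ι → ℝ) :
    -∑ i, f i * Real.logb 2 (f i) = (∑ i, Real.negMulLog (f i)) / Real.log 2 := by
  rw [Finset.sum_div, ← Finset.sum_neg_distrib]
  exact Finset.sum_congr rfl fun i _ => by
    simp only [Real.negMulLog, Real.logb]
    ring

lemma vnEntropy_eq {ι : Type*} [Fintype ι] [DecidableEq ι] {A : Matrix ι ι ℂ}
    (h : A.IsHermitian) :
    vnEntropy A = (∑ i, Real.negMulLog (h.eigenvalues i)) / Real.log 2 := by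
  rw [vnEntropy, dif_pos h, shannon_eq]

lemma eigen_eq_of_diag {n : Type*} [Fintype n] [DecidableEq n] {A : Matrix n n ℂ}
    (h : A.IsHermitian) (hdiag : ∀ i j, i ≠ j → A i j = 0) (j : n) :
    h.eigenvalues j = ∑ i, Complex.normSq ((h.eigenvectorUnitary : Matrix n n ℂ) i j)
      * (A i i).re := by
  have h1 : ((h.eigenvalues j : ℝ) : ℂ)
      = (star (h.eigenvectorUnitary : Matrix n n ℂ) * A * (h.eigenvectorUnitary : Matrix n n ℂ)) j j := by
    rw [← Unitary.conjStarAlgAut_star_apply (S := ℂ), h.conjStarAlgAut_star_eigenvectorUnitary]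
    simp [Matrix.diagonal_apply]
  have h2 : (star (h.eigenvectorUnitary : Matrix n n ℂ) * A * (h.eigenvectorUnitary : Matrix n n ℂ)) j j
      = ∑ i, ((Complex.normSq ((h.eigenvectorUnitary : Matrix n n ℂ) i j) * (A i i).re : ℝ) : ℂ) := by
    rw [Matrix.mul_apply]
    have h3 : ∀ i, (star (h.eigenvectorUnitary : Matrix n n ℂ) * A) j i
        = star ((h.eigenvectorUnitary : Matrix n n ℂ) i j) * A i i := by
      intro i
      rw [Matrix.mul_apply]
      rw [Finset.sum_eq_single i]
      · rw [Matrix.star_apply]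
      · intro b _ hb
        rw [hdiag b i hb, mul_zero]
      · simp
    have hAii : ∀ i, A i i = ((A i i).re : ℂ) := fun i =>
      (Complex.conj_eq_iff_re.mp (h.apply i i)).symm
    refine Finset.sum_congr rfl fun i _ => ?_
    rw [h3 i, hAii i, Complex.ofReal_mul, mul_right_comm]
    congr 1
    rw [mul_comm, Complex.star_def]
    exact Complex.mul_conj _
  have h4 : ((h.eigenvalues j : ℝ) : ℂ)
      = ((∑ i, Complex.normSq ((h.eigenvectorUnitary : Matrix n n ℂ) i j) * (A i i).re : ℝ) : ℂ) := by
    rw [h1, h2]; push_cast; rfl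
  exact_mod_cast h4

lemma entropy_le_diag {n : Type*} [Fintype n] [DecidableEq n] {A : Matrix n n ℂ}
    (hA : A.PosSemidef) :
    ∑ j, Real.negMulLog (hA.1.eigenvalues j) ≤ ∑ i, Real.negMulLog ((A i i).re) := by
  have h := jensen_transfer
    (fun i j => Complex.normSq ((hA.1.eigenvectorUnitary : Matrix n n ℂ) i j))
    (fun i j => Complex.normSq_nonneg _) (unitary_row _) (unitary_col _)
    hA.1.eigenvalues hA.eigenvalues_nonneg
  refine h.trans_eq (Finset.sum_congr rfl fun i _ => ?_)
  rw [diag_re hA.1 i]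

lemma diag_re_nonneg {n : Type*} [Fintype n] [DecidableEq n] {A : Matrix n n ℂ}
    (hA : A.PosSemidef) (i : n) : 0 ≤ (A i i).re := by
  rw [diag_re hA.1 i]
  exact Finset.sum_nonneg fun j _ =>
    mul_nonneg (Complex.normSq_nonneg _) (hA.eigenvalues_nonneg j)

lemma entropy_eq_of_diag {n : Type*} [Fintype n] [DecidableEq n] {A : Matrix n n ℂ}
    (hA : A.PosSemidef) (hdiag : ∀ i j, i ≠ j → A i j = 0) :
    ∑ j, Real.negMulLog (hA.1.eigenvalues j) = ∑ i, Real.negMulLog ((A i i).re) := by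
  refine le_antisymm (entropy_le_diag hA) ?_
  have h := jensen_transfer
    (fun j i => Complex.normSq ((hA.1.eigenvectorUnitary : Matrix n n ℂ) i j))
    (fun j i => Complex.normSq_nonneg _) (unitary_col _) (unitary_row _)
    (fun i => (A i i).re) (diag_re_nonneg hA)
  refine h.trans_eq (Finset.sum_congr rfl fun j _ => ?_)
  rw [← eigen_eq_of_diag hA.1 hdiag j]

lemma gdChannel_eq {d e : ℕ} (φ : Fin d → (Fin e → ℂ)) (ρ : Matrix (Fin d) (Fin d) ℂ) :
    gdChannel φ ρ
      = ∑ t, (Matrix.diagonal fun i => φ i t) * ρ * (Matrix.diagonal fun i => φ i t)ᴴ := by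
  ext i j
  simp only [gdChannel, Matrix.of_apply, Matrix.sum_apply, Matrix.diagonal_conjTranspose,
    Matrix.mul_diagonal, Matrix.diagonal_mul, Pi.star_apply, Finset.mul_sum]
  refine Finset.sum_congr rfl fun t _ => ?_
  show ρ i j * (star (φ j t) * φ i t) = φ i t * ρ i j * star (φ j t)
  ring

lemma gdChannel_psd {d e : ℕ} (φ : Fin d → (Fin e → ℂ)) {ρ : Matrix (Fin d) (Fin d) ℂ}
    (hρ : ρ.PosSemidef) : (gdChannel φ ρ).PosSemidef := by
  rw [gdChannel_eq]
  refine Finset.sum_induction _ _ (fun a b ha hb => ha.add hb) Matrix.PosSemidef.zero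
    fun t _ => hρ.mul_mul_conjTranspose_same _

lemma gram_one {d e : ℕ} {φ : Fin d → (Fin e → ℂ)}
    (hφ : ∀ i, ∑ x, Complex.normSq (φ i x) = 1) (i : Fin d) :
    ∑ x, star (φ i x) * φ i x = (1 : ℂ) := by
  have : ∑ x, star (φ i x) * φ i x = ∑ x, (Complex.normSq (φ i x) : ℂ) := by
    refine Finset.sum_congr rfl fun x _ => ?_
    rw [mul_comm, Complex.star_def]
    exact Complex.mul_conj _
  rw [this]
  rw [← Complex.ofReal_sum]
  rw [hφ i]
  simp

end Aux

/-- **Generalized dephasing channels.**  For every input density operator `ρ` with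
diagonal `r`, `H(ρ) + H(N(ρ)) − H(N^c(ρ)) ≤ 2 H(r) − H(∑ r_i φ_i)`, with equality
whenever `ρ` is diagonal in the dephasing basis; hence the channel mutual information
is maximized by inputs diagonal in the dephasing basis. -/
theorem generalized_dephasing_mutual_info {d e : ℕ}
    (φ : Fin d → (Fin e → ℂ)) (hφ : ∀ i, ∑ x, Complex.normSq (φ i x) = 1)
    (ρ : Matrix (Fin d) (Fin d) ℂ) (hρ : ρ.PosSemidef) (htr : ρ.trace = 1) :
    (vnEntropy ρ + vnEntropy (gdChannel φ ρ) - vnEntropy (gdComplement φ ρ) ≤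
      2 * (-∑ i, (ρ i i).re * Real.logb 2 ((ρ i i).re)) -
        vnEntropy (∑ i, (((ρ i i).re : ℝ) : ℂ) • proj (φ i)))
    ∧ ((∀ i j, i ≠ j → ρ i j = 0) →
        vnEntropy ρ + vnEntropy (gdChannel φ ρ) - vnEntropy (gdComplement φ ρ) =
          2 * (-∑ i, (ρ i i).re * Real.logb 2 ((ρ i i).re)) -
            vnEntropy (∑ i, (((ρ i i).re : ℝ) : ℂ) • proj (φ i))) := by
  have hAii : ∀ i, ρ i i = ((ρ i i).re : ℂ) := fun i =>
    (Complex.conj_eq_iff_re.mp (hρ.1.apply i i)).symm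
  have hcompl : gdComplement φ ρ = ∑ i, (((ρ i i).re : ℝ) : ℂ) • proj (φ i) := by
    unfold gdComplement
    exact Finset.sum_congr rfl fun i _ => by rw [← hAii i]
  have hlog2 : (0:ℝ) < Real.log 2 := Real.log_pos one_lt_two
  -- Shannon entropy of the diagonal
  have hsh : -∑ i, (ρ i i).re * Real.logb 2 ((ρ i i).re)
      = (∑ i, Real.negMulLog ((ρ i i).re)) / Real.log 2 := shannon_eq _
  -- N(ρ) facts
  have hNpsd : (gdChannel φ ρ).PosSemidef := gdChannel_psd φ hρ
  have hNdiag : ∀ i, (gdChannel φ ρ) i i = ρ i i := by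
    intro i
    show ρ i i * _ = ρ i i
    rw [gram_one hφ i, mul_one]
  -- inequality part
  have hineq : vnEntropy ρ + vnEntropy (gdChannel φ ρ)
      ≤ 2 * (-∑ i, (ρ i i).re * Real.logb 2 ((ρ i i).re)) := by
    rw [hsh, vnEntropy_eq hρ.1, vnEntropy_eq hNpsd.1]
    have h1 := entropy_le_diag hρ
    have h2 := entropy_le_diag hNpsd
    have h2' : ∑ j, Real.negMulLog (hNpsd.1.eigenvalues j)
        ≤ ∑ i, Real.negMulLog ((ρ i i).re) := by
      refine h2.trans_eq (Finset.sum_congr rfl fun i _ => ?_)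
      rw [hNdiag i]
    rw [← add_div, two_mul, ← add_div]
    exact (div_le_div_iff_of_pos_right hlog2).mpr (add_le_add h1 h2')
  constructor
  · rw [hcompl] at *
    linarith [hineq]
  · intro hdiag
    have hN : gdChannel φ ρ = ρ := by
      ext i j
      by_cases hij : i = j
      · subst hij; exact hNdiag i
      · show ρ i j * _ = ρ i j
        rw [hdiag i j hij, zero_mul]
    have heq : vnEntropy ρ = -∑ i, (ρ i i).re * Real.logb 2 ((ρ i i).re) := by
      rw [vnEntropy_eq hρ.1, hsh, entropy_eq_of_diag hρ hdiag]
    rw [hcompl, hN, heq]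
    ring
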